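/- There is an absolute constant C such that the following holds. Let r ≥ 1, let W₁,…,W_r be binary words each containing at least one symbol 1, let k₁,…,k_r ≥ 1 be integers, and let W be the concatenation W₁^{k₁} W₂^{k₂} ⋯ W_r^{k_r}. Then ‖P_W‖₁ ≤ C ∑_{i=1}^r log(2+k_i) · ‖P_{W_i}‖₁. -/

import Mathlib

open Finset intervalIntegral

/-- `e θ = e^{2πiθ}`. -/
noncomputable def e (θ : ℝ) : ℂ := Complex.exp (2 * Real.pi * Complex.I * θ)

/-- For a binary word `W = (x₁,…,x_ℓ)`, `P_W(θ) = ∑_{m=1}^ℓ x_m e(mθ)`. -/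
noncomputable def PW (W : List Bool) (θ : ℝ) : ℂ :=
  ∑ m ∈ Finset.range W.length, (if W.getD m false then 1 else 0) * e ((m + 1) * θ)

noncomputable def Complex.abs : AbsoluteValue ℂ ℝ where
  toFun z := ‖z‖
  map_mul' := norm_mul
  nonneg' := norm_nonneg
  eq_zero' _ := norm_eq_zero
  add_le' := norm_add_le
lemma Complex.abs_def' (z : ℂ) : Complex.abs z = ‖z‖ := rfl
lemma Complex.norm_eq_abs (z : ℂ) : ‖z‖ = Complex.abs z := rfl
lemma Complex.abs_apply (z : ℂ) : Complex.abs z = Real.sqrt (Complex.normSq z) := by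
  rw [Complex.abs_def', Complex.norm_def]
lemma Complex.continuous_abs : Continuous Complex.abs := continuous_norm
lemma Complex.abs_exp_ofReal_mul_I (x : ℝ) : Complex.abs (Complex.exp (x * Complex.I)) = 1 :=
  Complex.norm_exp_ofReal_mul_I x
lemma Complex.abs_conj (z : ℂ) : Complex.abs ((starRingEnd ℂ) z) = Complex.abs z := Complex.norm_conj z
lemma Complex.sq_abs (z : ℂ) : Complex.abs z ^ 2 = Complex.normSq z := Complex.sq_norm z

open MeasureTheory

noncomputable def Dk (k : ℕ) (x : ℝ) : ℂ := ∑ j ∈ Finset.range k, e (j * x)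

lemma e_add (x y : ℝ) : e (x + y) = e x * e y := by
  simp [e, ← Complex.exp_add]; ring_nf
lemma abs_e (x : ℝ) : Complex.abs (e x) = 1 := by
  simp [e]; rw [show (2 * (Real.pi:ℂ) * Complex.I * x) = (2 * Real.pi * x : ℝ) * Complex.I by push_cast; ring]
  exact Complex.abs_exp_ofReal_mul_I _
lemma continuous_e : Continuous e := by
  unfold e; fun_prop
attribute [fun_prop] continuous_e
lemma continuous_PW (W : List Bool) : Continuous (PW W) := by
  unfold PW
  exact continuous_finset_sum _ fun m _ => by fun_prop
lemma continuous_Dk (k : ℕ) : Continuous (Dk k) := by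
  unfold Dk
  exact continuous_finset_sum _ fun m _ => by fun_prop
lemma e_nat (n : ℕ) : e n = 1 := by
  simp [e, show (2 * (Real.pi:ℂ) * Complex.I * n) = n * (2 * Real.pi * Complex.I) by ring,
    Complex.exp_nat_mul, Complex.exp_two_pi_mul_I]
lemma e_pow (j : ℕ) (x : ℝ) : e (j * x) = e x ^ j := by
  induction j with
  | zero => simp [e]
  | succ n ih => rw [show ((n+1 : ℕ) : ℝ) * x = n * x + x by push_cast; ring, e_add, ih]; ring
lemma PW_append (A B : List Bool) (θ : ℝ) :
    PW (A ++ B) θ = PW A θ + e (A.length * θ) * PW B θ := by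
  unfold PW
  rw [List.length_append, Finset.sum_range_add, Finset.mul_sum]
  congr 1
  · apply Finset.sum_congr rfl
    intro m hm
    rw [List.getD_append _ _ _ _ (Finset.mem_range.1 hm)]
  · apply Finset.sum_congr rfl
    intro m hm
    rw [List.getD_append_right _ _ _ _ (Nat.le_add_right _ _), Nat.add_sub_cancel_left]
    rw [show ((A.length + m : ℕ) + 1 : ℝ) * θ = A.length * θ + ((m:ℝ)+1) * θ by push_cast; ring,
      e_add]
    ring

lemma Dk_succ (k : ℕ) (x : ℝ) : Dk (k+1) x = 1 + e x * Dk k x := by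
  unfold Dk
  rw [Finset.sum_range_succ']
  have h1 : ∀ j : ℕ, e (((j:ℕ)+1 : ℕ) * x) = e x * e (j * x) := fun j => by
    rw [show (((j:ℕ)+1 : ℕ) : ℝ) * x = x + j * x by push_cast; ring, e_add]
  simp_rw [h1]
  rw [← Finset.mul_sum]
  have h0 : e ((0:ℕ) * x) = 1 := by simp [e]
  rw [h0, add_comm]
lemma PW_replicate (A : List Bool) (k : ℕ) (θ : ℝ) :
    PW (List.replicate k A).flatten θ = PW A θ * Dk k (A.length * θ) := by
  induction k with
  | zero => simp [PW, Dk]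
  | succ n ih =>
      rw [List.replicate_succ, List.flatten_cons, PW_append, ih, Dk_succ]
      ring
lemma abs_PW_flatten_le (L : List (List Bool)) (θ : ℝ) :
    Complex.abs (PW L.flatten θ) ≤ ∑ i ∈ Finset.range L.length, Complex.abs (PW (L.getD i []) θ) := by
  induction L with
  | nil => simp [PW]
  | cons A L ih =>
      rw [List.flatten_cons, PW_append]
      refine le_trans (Complex.abs.add_le _ _) ?_
      rw [map_mul, abs_e, one_mul, List.length_cons, Finset.sum_range_succ']
      simp only [List.getD_cons_succ, List.getD_cons_zero]
      linarith [ih]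
lemma abs_Dk_le (k : ℕ) (x : ℝ) : Complex.abs (Dk k x) ≤ k := by
  unfold Dk
  refine le_trans (Complex.abs.sum_le _ _) ?_
  simp [abs_e]
lemma abs_e_sub_one (x : ℝ) : Complex.abs (e x - 1) = 2 * |Real.sin (Real.pi * x)| := by
  have h : e x - 1 = (Complex.cos (2*Real.pi*x) - 1) + Complex.sin (2*Real.pi*x) * Complex.I := by
    rw [e, show (2 * (Real.pi:ℂ) * Complex.I * x) = ((2*Real.pi*x : ℝ) : ℂ) * Complex.I by push_cast; ring,
      Complex.exp_mul_I]
    push_cast; ring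
  rw [h]
  rw [show ((Complex.cos (2*Real.pi*x) - 1) + Complex.sin (2*Real.pi*x) * Complex.I)
      = Complex.ofReal (Real.cos (2*Real.pi*x) - 1) + Complex.ofReal (Real.sin (2*Real.pi*x)) * Complex.I by
    push_cast; ring]
  rw [Complex.abs_apply, Complex.normSq_add_mul_I]
  have hc : Real.cos (2*Real.pi*x) = 1 - 2 * Real.sin (Real.pi*x)^2 := by
    rw [show 2*Real.pi*x = 2*(Real.pi*x) by ring, Real.cos_two_mul']
    nlinarith [Real.sin_sq_add_cos_sq (Real.pi*x)]
  have hs : Real.sin (2*Real.pi*x) = 2 * Real.sin (Real.pi*x) * Real.cos (Real.pi*x) := by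
    rw [show 2*Real.pi*x = 2*(Real.pi*x) by ring, Real.sin_two_mul]
  rw [hc, hs]
  rw [show (1 - 2*Real.sin (Real.pi*x)^2 - 1)^2 + (2*Real.sin (Real.pi*x)*Real.cos (Real.pi*x))^2
      = 4 * Real.sin (Real.pi*x)^2 * (Real.sin (Real.pi*x)^2 + Real.cos (Real.pi*x)^2) by ring,
    Real.sin_sq_add_cos_sq, mul_one]
  rw [show (4:ℝ) * Real.sin (Real.pi*x)^2 = (2*|Real.sin (Real.pi*x)|)^2 by
    rw [mul_pow, sq_abs]; ring]
  exact Real.sqrt_sq (by positivity)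
lemma Dk_geom (k : ℕ) (x : ℝ) (h : e x ≠ 1) : Dk k x = (e x ^ k - 1) / (e x - 1) := by
  unfold Dk
  simp_rw [e_pow]
  exact geom_sum_eq h k
lemma abs_Dk_le_inv_sin (k : ℕ) (x : ℝ) (h : Real.sin (Real.pi * x) ≠ 0) :
    Complex.abs (Dk k x) ≤ 1 / |Real.sin (Real.pi * x)| := by
  have he : e x ≠ 1 := by
    intro hh
    apply h
    have := abs_e_sub_one x
    rw [hh, sub_self, map_zero] at this
    have habs : |Real.sin (Real.pi * x)| = 0 := by
      have := abs_nonneg (Real.sin (Real.pi * x)); linarith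
    exact abs_eq_zero.mp habs
  rw [Dk_geom k x he, map_div₀, abs_e_sub_one]
  rw [div_le_div_iff₀ (by positivity) (by positivity)]
  have hle : Complex.abs (e x ^ k - 1) ≤ 2 := by
    have := Complex.abs.sub_le (e x ^ k) 0 1
    simp only [sub_zero, zero_sub, map_neg_eq_map, map_one, map_pow, abs_e, one_pow] at this
    linarith
  nlinarith [abs_nonneg (Real.sin (Real.pi*x)), hle, Complex.abs.nonneg (e x ^ k - 1)]

lemma log_three_ge_one : (1:ℝ) ≤ Real.log 3 := by
  rw [show (1:ℝ) = Real.log (Real.exp 1) by rw [Real.log_exp]]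
  apply Real.log_le_log (Real.exp_pos 1)
  linarith [Real.exp_one_lt_d9]
lemma sin_lower (x : ℝ) (h0 : 0 ≤ x) (h1 : x ≤ 1/2) : 2 * x ≤ |Real.sin (Real.pi * x)| := by
  have := Real.mul_le_sin (x := Real.pi * x) (by positivity)
    (by nlinarith [Real.pi_pos])
  refine le_trans ?_ (le_abs_self _)
  calc 2 * x = 2 / Real.pi * (Real.pi * x) := by field_simp
    _ ≤ Real.sin (Real.pi * x) := this
lemma abs_Dk_le_inv (k : ℕ) (x : ℝ) (h0 : 0 < x) (h1 : x ≤ 1/2) :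
    Complex.abs (Dk k x) ≤ 1 / (2 * x) := by
  have hs := sin_lower x h0.le h1
  have hne : Real.sin (Real.pi * x) ≠ 0 := by
    intro hh; rw [hh] at hs; simp at hs; linarith
  refine le_trans (abs_Dk_le_inv_sin k x hne) ?_
  apply one_div_le_one_div_of_le (by linarith) hs
lemma abs_Dk_le_inv' (k : ℕ) (x : ℝ) (h0 : 1/2 ≤ x) (h1 : x < 1) :
    Complex.abs (Dk k x) ≤ 1 / (2 * (1 - x)) := by
  have key : |Real.sin (Real.pi * x)| = |Real.sin (Real.pi * (1 - x))| := by
    rw [show Real.pi * x = Real.pi - Real.pi * (1-x) by ring, Real.sin_pi_sub]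
  have hs := sin_lower (1-x) (by linarith) (by linarith)
  rw [← key] at hs
  have hne : Real.sin (Real.pi * x) ≠ 0 := by
    intro hh; rw [hh] at hs; simp at hs; linarith
  refine le_trans (abs_Dk_le_inv_sin k x hne) ?_
  apply one_div_le_one_div_of_le (by linarith) hs
lemma Dk_intble (k : ℕ) (a b : ℝ) :
    IntervalIntegrable (fun x => Complex.abs (Dk k x)) MeasureTheory.volume a b :=
  (Complex.continuous_abs.comp (continuous_Dk k)).intervalIntegrable a b
lemma Dk_L1 (k : ℕ) (hk : 1 ≤ k) :
    ∫ x in (0:ℝ)..1, Complex.abs (Dk k x) ≤ 3 * Real.log (2 + k) := by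
  have hlog : (1:ℝ) ≤ Real.log (2 + k) := by
    refine le_trans log_three_ge_one (Real.log_le_log (by norm_num) ?_)
    have : (1:ℝ) ≤ (k:ℝ) := by exact_mod_cast hk
    linarith
  rcases eq_or_lt_of_le hk with h1 | h2
  · -- k = 1
    have : Dk k = fun _ => 1 := by
      funext x; rw [← h1]; simp [Dk, e]
    rw [this]
    simp only [map_one]
    rw [intervalIntegral.integral_const]
    simp
    linarith
  -- k ≥ 2
  have hk2 : (2:ℝ) ≤ (k:ℝ) := by exact_mod_cast h2
  set δ : ℝ := 1/(k:ℝ) with hδ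
  have hδ0 : 0 < δ := by positivity
  have hδle : δ ≤ 1/2 := by
    rw [hδ, div_le_div_iff₀ (by positivity) (by norm_num)]; linarith
  have split : ∫ x in (0:ℝ)..1, Complex.abs (Dk k x)
      = (∫ x in (0:ℝ)..δ, Complex.abs (Dk k x)) + (∫ x in δ..(1/2:ℝ), Complex.abs (Dk k x))
        + (∫ x in (1/2:ℝ)..(1-δ), Complex.abs (Dk k x)) + (∫ x in (1-δ)..1, Complex.abs (Dk k x)) := by
    rw [integral_add_adjacent_intervals (Dk_intble k 0 δ) (Dk_intble k δ (1/2)),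
      integral_add_adjacent_intervals ((Dk_intble k 0 δ).trans (Dk_intble k δ (1/2))) (Dk_intble k (1/2) (1-δ)),
      integral_add_adjacent_intervals (((Dk_intble k 0 δ).trans (Dk_intble k δ (1/2))).trans (Dk_intble k (1/2) (1-δ))) (Dk_intble k (1-δ) 1)]
  have b1 : (∫ x in (0:ℝ)..δ, Complex.abs (Dk k x)) ≤ 1 := by
    calc (∫ x in (0:ℝ)..δ, Complex.abs (Dk k x)) ≤ ∫ _ in (0:ℝ)..δ, (k:ℝ) := by
          apply integral_mono_on hδ0.le (Dk_intble k 0 δ) (intervalIntegrable_const)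
          intro x _; exact abs_Dk_le k x
      _ = 1 := by rw [intervalIntegral.integral_const]; rw [smul_eq_mul, hδ]; field_simp; ring
  have b4 : (∫ x in (1-δ)..1, Complex.abs (Dk k x)) ≤ 1 := by
    calc (∫ x in (1-δ)..1, Complex.abs (Dk k x)) ≤ ∫ _ in (1-δ)..1, (k:ℝ) := by
          apply integral_mono_on (by linarith) (Dk_intble k _ _) (intervalIntegrable_const)
          intro x _; exact abs_Dk_le k x
      _ = 1 := by rw [intervalIntegral.integral_const]; rw [smul_eq_mul, hδ]; field_simp; ring
  have invint : ∀ a b : ℝ, 0 < a → a ≤ b → IntervalIntegrable (fun x => 1/(2*x)) MeasureTheory.volume a b := by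
    intro a b ha hab
    apply ContinuousOn.intervalIntegrable
    apply ContinuousOn.div continuousOn_const (by fun_prop)
    intro x hx
    rw [Set.uIcc_of_le hab] at hx
    exact ne_of_gt (by nlinarith [hx.1])
  have hk0 : (k:ℝ) ≠ 0 := by linarith
  have midval : ∫ x in δ..(1/2:ℝ), 1/(2*x) = (1/2) * Real.log ((k:ℝ)/2) := by
    have h12 : ∀ x : ℝ, 1/(2*x) = (1/2) * (1/x) := by intro x; field_simp
    simp_rw [h12]
    rw [intervalIntegral.integral_const_mul, integral_one_div (by
      intro hx; rw [Set.uIcc_of_le hδle] at hx; exact absurd hx.1 (by linarith))]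
    congr 1
    rw [hδ]
    congr 1
    field_simp
  have b2 : (∫ x in δ..(1/2:ℝ), Complex.abs (Dk k x)) ≤ (1/2) * Real.log ((k:ℝ)/2) := by
    rw [← midval]
    apply integral_mono_on hδle (Dk_intble k _ _) (invint δ (1/2) hδ0 hδle)
    intro x hx
    exact abs_Dk_le_inv k x (lt_of_lt_of_le hδ0 hx.1) hx.2
  have b3 : (∫ x in (1/2:ℝ)..(1-δ), Complex.abs (Dk k x)) ≤ (1/2) * Real.log ((k:ℝ)/2) := by
    have comp : (∫ x in (1/2:ℝ)..(1-δ), 1/(2*(1-x))) = ∫ x in δ..(1/2:ℝ), 1/(2*x) := by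
      have hcs := intervalIntegral.integral_comp_sub_left (a := (1/2:ℝ)) (b := 1-δ) (fun u => 1/(2*u)) 1
      have e1 : (1:ℝ) - (1-δ) = δ := by ring
      have e2 : (1:ℝ) - 1/2 = 1/2 := by norm_num
      rw [e1, e2] at hcs
      exact hcs
    rw [← midval, ← comp]
    apply integral_mono_on (by linarith) (Dk_intble k _ _) ?_
    · intro x hx
      exact abs_Dk_le_inv' k x hx.1 (by linarith [hx.2])
    · have hii := (invint δ (1/2) hδ0 hδle).comp_sub_left 1
      have e1 : (1:ℝ) - δ = 1 - δ := rfl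
      have e2 : (1:ℝ) - 1/2 = 1/2 := by norm_num
      rw [e2] at hii
      exact hii.symm
  have logval : (1/2) * Real.log ((k:ℝ)/2) ≤ (1/2) * Real.log (2+k) := by
    apply mul_le_mul_of_nonneg_left ?_ (by norm_num)
    apply Real.log_le_log (by positivity)
    linarith
  rw [split]
  linarith [b1, b2, b3, b4, logval]

lemma e_int (n : ℤ) : e n = 1 := by
  rw [e]
  have : (2 * (Real.pi:ℂ) * Complex.I * (((n:ℤ):ℝ):ℂ)) = (n:ℤ) * (2 * Real.pi * Complex.I) := by
    push_cast; ring
  rw [this]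
  exact Complex.exp_int_mul_two_pi_mul_I n
lemma integral_e (n : ℤ) : (∫ t in (0:ℝ)..1, e (n * t)) = if n = 0 then 1 else 0 := by
  by_cases h : n = 0
  · simp [h, e]
  · have hc : (2 * (Real.pi:ℂ) * Complex.I * n) ≠ 0 := by
      simp [Real.pi_ne_zero, Complex.I_ne_zero, h]
    have : ∀ t : ℝ, e (n * t) = Complex.exp ((2 * (Real.pi:ℂ) * Complex.I * n) * t) := by
      intro t; rw [e]; congr 1; push_cast; ring
    simp_rw [this]
    rw [integral_exp_mul_complex hc]
    rw [if_neg h]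
    simp only [Complex.ofReal_one, Complex.ofReal_zero, mul_one, mul_zero, Complex.exp_zero]
    have h1 : Complex.exp (2 * (Real.pi:ℂ) * Complex.I * n) = 1 := by
      rw [show (2 * (Real.pi:ℂ) * Complex.I * n) = (n:ℤ) * (2 * Real.pi * Complex.I) by push_cast; ring]
      exact Complex.exp_int_mul_two_pi_mul_I n
    rw [h1, sub_self, zero_div]
lemma e_conj (x : ℝ) : (starRingEnd ℂ) (e x) = e (-x) := by
  rw [e, e, ← Complex.exp_conj]
  congr 1
  simp only [map_mul, Complex.conj_I, Complex.conj_ofReal]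
  rw [show ((2:ℂ)) = ((2:ℝ):ℂ) by norm_num, Complex.conj_ofReal]
  push_cast
  ring
lemma PW_periodic (W : List Bool) : Function.Periodic (PW W) 1 := by
  intro θ
  unfold PW
  apply Finset.sum_congr rfl
  intro m _
  rw [show ((m:ℝ)+1) * (θ + 1) = ((m:ℝ)+1) * θ + ((m+1 : ℕ) : ℝ) by push_cast; ring, e_add]
  rw [show ((m+1:ℕ):ℝ) = ((m+1:ℤ):ℝ) by push_cast; ring, e_int]
  ring
-- the key spectral computation
lemma spectral (ℓ m : ℕ) (hm : m < ℓ) (θ : ℝ) :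
    (∫ t in (0:ℝ)..1, e (((m:ℝ)+1) * (θ - t)) * (e (ℓ * t) * (Dk ℓ t * (starRingEnd ℂ) (Dk ℓ t))))
      = ((m:ℝ)+1) * e (((m:ℝ)+1) * θ) := by
  have expand : ∀ t : ℝ, e (((m:ℝ)+1) * (θ - t)) * (e (ℓ * t) * (Dk ℓ t * (starRingEnd ℂ) (Dk ℓ t)))
      = ∑ a ∈ Finset.range ℓ, ∑ b ∈ Finset.range ℓ,
          e (((m:ℝ)+1) * θ) * e ((((ℓ:ℤ) + a - (m + 1 + b) : ℤ) : ℝ) * t) := by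
    intro t
    unfold Dk
    rw [map_sum, Finset.sum_mul_sum, Finset.mul_sum, Finset.mul_sum]
    apply Finset.sum_congr rfl; intro a _
    rw [Finset.mul_sum, Finset.mul_sum]
    apply Finset.sum_congr rfl; intro b _
    rw [e_conj]
    rw [← e_add, ← e_add, ← e_add, ← e_add]
    congr 1
    push_cast
    ring
  simp_rw [expand]
  rw [intervalIntegral.integral_finset_sum (fun a _ => (by
      apply Continuous.intervalIntegrable
      exact continuous_finset_sum _ fun b _ => by
        exact continuous_const.mul (continuous_e.comp (by fun_prop))))]
  have : ∀ a ∈ Finset.range ℓ, (∫ t in (0:ℝ)..1, ∑ b ∈ Finset.range ℓ,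
      e (((m:ℝ)+1) * θ) * e ((((ℓ:ℤ) + a - (m + 1 + b) : ℤ) : ℝ) * t))
      = ∑ b ∈ Finset.range ℓ, e (((m:ℝ)+1) * θ) * (if ((ℓ:ℤ) + a - (m + 1 + b) : ℤ) = 0 then 1 else 0) := by
    intro a _
    rw [intervalIntegral.integral_finset_sum (fun b _ => by
      apply Continuous.intervalIntegrable
      exact continuous_const.mul (continuous_e.comp (by fun_prop)))]
    apply Finset.sum_congr rfl; intro b _
    rw [intervalIntegral.integral_const_mul, integral_e]
  rw [Finset.sum_congr rfl this]
  have count : ∀ a ∈ Finset.range ℓ, (∑ b ∈ Finset.range ℓ,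
      e (((m:ℝ)+1) * θ) * (if ((ℓ:ℤ) + a - (m + 1 + b) : ℤ) = 0 then (1:ℂ) else 0))
      = if a < m + 1 then e (((m:ℝ)+1) * θ) else 0 := by
    intro a ha
    have hb : ∀ b : ℕ, (((ℓ:ℤ) + a - (m + 1 + b) : ℤ) = 0) ↔ (b = ℓ + a - (m + 1)) := by
      intro b; omega
    simp_rw [hb, mul_ite, mul_one, mul_zero]
    rw [Finset.sum_ite_eq' (Finset.range ℓ) (ℓ + a - (m+1)) (fun _ => e (((m:ℝ)+1) * θ))]
    have : (ℓ + a - (m+1) ∈ Finset.range ℓ) ↔ a < m + 1 := by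
      rw [Finset.mem_range]; omega
    by_cases hc : a < m + 1
    · rw [if_pos (this.mpr hc), if_pos hc]
    · rw [if_neg (fun hh => hc (this.mp hh)), if_neg hc]
  rw [Finset.sum_congr rfl count]
  rw [Finset.range_eq_Ico, ← Finset.sum_Ico_consecutive _ (Nat.zero_le (m+1)) (by omega : m + 1 ≤ ℓ)]
  have h1 : ∑ a ∈ Finset.Ico 0 (m+1), (if a < m + 1 then e (((m:ℝ)+1) * θ) else 0)
      = (m+1 : ℕ) * e (((m:ℝ)+1) * θ) := by
    rw [Finset.sum_ite_of_true (fun a ha => by simp at ha; omega)]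
    rw [Finset.sum_const, Nat.card_Ico]
    simp [nsmul_eq_mul]
  have h2 : ∑ a ∈ Finset.Ico (m+1) ℓ, (if a < m + 1 then e (((m:ℝ)+1) * θ) else 0) = 0 := by
    apply Finset.sum_eq_zero
    intro a ha
    rw [if_neg]
    simp at ha; omega
  rw [h1, h2, add_zero]
  push_cast
  ring

noncomputable def QW (W : List Bool) (θ : ℝ) : ℂ :=
  ∑ m ∈ Finset.range W.length,
    (if W.getD m false then 1 else 0) * ((2*Real.pi*Complex.I*((m:ℝ)+1)) * e (((m:ℝ)+1)*θ))
lemma continuous_QW (W : List Bool) : Continuous (QW W) := by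
  unfold QW
  exact continuous_finset_sum _ fun m _ => by
    exact continuous_const.mul (continuous_const.mul (continuous_e.comp (by fun_prop)))
lemma hasDerivAt_e (c : ℝ) (θ : ℝ) :
    HasDerivAt (fun θ : ℝ => e (c * θ)) (2*Real.pi*Complex.I*c * e (c * θ)) θ := by
  have h1 : HasDerivAt (fun θ : ℝ => ((c * θ : ℝ) : ℂ)) (c:ℂ) θ := by
    have := ((hasDerivAt_id ((θ:ℝ):ℂ)).const_mul (c:ℂ)).comp_ofReal
    simpa using this
  have h2 := (h1.const_mul (2*Real.pi*Complex.I)).cexp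
  have h3 : ∀ x : ℝ, Complex.exp (2*Real.pi*Complex.I * ((c * x : ℝ) : ℂ)) = e (c * x) := by
    intro x; rw [e]
  simp_rw [h3] at h2
  convert h2 using 1
  ring
lemma hasDerivAt_PW (W : List Bool) (θ : ℝ) : HasDerivAt (PW W) (QW W θ) θ := by
  unfold PW QW
  apply HasDerivAt.fun_sum
  intro m _
  have := (hasDerivAt_e ((m:ℝ)+1) θ).const_mul (if W.getD m false then (1:ℂ) else 0)
  convert this using 2
  · rfl
  · push_cast; ring_nf
lemma ftc_bound (W : List Bool) (a b : ℝ) (hab : a ≤ b) :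
    Complex.abs (PW W b) ≤ Complex.abs (PW W a) + ∫ t in a..b, Complex.abs (QW W t) := by
  have key : PW W b - PW W a = ∫ t in a..b, QW W t := by
    rw [intervalIntegral.integral_eq_sub_of_hasDerivAt (fun t _ => hasDerivAt_PW W t)
      ((continuous_QW W).intervalIntegrable a b)]
  have h1 : Complex.abs (PW W b) ≤ Complex.abs (PW W a) + Complex.abs (PW W b - PW W a) := by
    have := Complex.abs.add_le (PW W a) (PW W b - PW W a)
    simpa using this
  refine h1.trans (add_le_add le_rfl ?_)
  rw [key]
  have := intervalIntegral.norm_integral_le_integral_norm (f := QW W) (μ := volume) hab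
  simpa [Complex.norm_eq_abs] using this
lemma parseval (ℓ : ℕ) : (∫ t in (0:ℝ)..1, (Complex.abs (Dk ℓ t))^2) = ℓ := by
  have key : (∫ t in (0:ℝ)..1, Dk ℓ t * (starRingEnd ℂ) (Dk ℓ t)) = (ℓ:ℂ) := by
    have expand : ∀ t : ℝ, Dk ℓ t * (starRingEnd ℂ) (Dk ℓ t)
        = ∑ a ∈ Finset.range ℓ, ∑ b ∈ Finset.range ℓ, e ((((a:ℤ) - b : ℤ) : ℝ) * t) := by
      intro t
      unfold Dk
      rw [map_sum, Finset.sum_mul_sum]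
      apply Finset.sum_congr rfl; intro a _
      apply Finset.sum_congr rfl; intro b _
      rw [e_conj, ← e_add]
      congr 1
      push_cast; ring
    simp_rw [expand]
    rw [intervalIntegral.integral_finset_sum (fun a _ => (by
        apply Continuous.intervalIntegrable
        exact continuous_finset_sum _ fun b _ => continuous_e.comp (by fun_prop)))]
    have inner : ∀ a ∈ Finset.range ℓ, (∫ t in (0:ℝ)..1, ∑ b ∈ Finset.range ℓ,
        e ((((a:ℤ) - b : ℤ) : ℝ) * t)) = 1 := by
      intro a ha
      rw [intervalIntegral.integral_finset_sum (fun b _ => by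
        apply Continuous.intervalIntegrable
        exact continuous_e.comp (by fun_prop))]
      have : ∀ b ∈ Finset.range ℓ, (∫ t in (0:ℝ)..1, e ((((a:ℤ) - b : ℤ) : ℝ) * t))
          = if b = a then 1 else 0 := by
        intro b _
        rw [integral_e]
        congr 1
        simp only [sub_eq_zero]
        have : ((a:ℤ) = (b:ℤ)) ↔ (b = a) := by omega
        exact propext this
      rw [Finset.sum_congr rfl this, Finset.sum_ite_eq' (Finset.range ℓ) a (fun _ => (1:ℂ)),
        if_pos ha]
    rw [Finset.sum_congr rfl inner, Finset.sum_const, Finset.card_range]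
    simp
  have cast : ∀ t : ℝ, (((Complex.abs (Dk ℓ t))^2 : ℝ) : ℂ) = Dk ℓ t * (starRingEnd ℂ) (Dk ℓ t) := by
    intro t
    rw [Complex.sq_abs, Complex.mul_conj]
  have := intervalIntegral.integral_ofReal (a := (0:ℝ)) (b := 1) (μ := volume)
    (f := fun t => (Complex.abs (Dk ℓ t))^2)
  rw [← Complex.ofReal_inj.mpr rfl] at this
  have key2 : ((∫ t in (0:ℝ)..1, (Complex.abs (Dk ℓ t))^2 : ℝ) : ℂ) = (ℓ:ℂ) := by
    rw [← intervalIntegral.integral_ofReal]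
    simp_rw [cast]
    exact key
  exact_mod_cast key2
lemma conv_identity (W : List Bool) (θ : ℝ) :
    QW W θ = (2*Real.pi*Complex.I) * ∫ t in (0:ℝ)..1,
      PW W (θ - t) * (e (W.length * t) * (Dk W.length t * (starRingEnd ℂ) (Dk W.length t))) := by
  set ℓ := W.length
  have expand : ∀ t : ℝ, PW W (θ - t) * (e (ℓ * t) * (Dk ℓ t * (starRingEnd ℂ) (Dk ℓ t)))
      = ∑ m ∈ Finset.range ℓ, (if W.getD m false then (1:ℂ) else 0) *
          (e (((m:ℝ)+1) * (θ - t)) * (e (ℓ * t) * (Dk ℓ t * (starRingEnd ℂ) (Dk ℓ t)))) := by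
    intro t
    rw [PW, Finset.sum_mul]
    apply Finset.sum_congr rfl; intro m _
    ring
  simp_rw [expand]
  rw [intervalIntegral.integral_finset_sum (fun m _ => by
    apply Continuous.intervalIntegrable
    apply Continuous.mul continuous_const
    apply Continuous.mul (continuous_e.comp (by fun_prop))
    apply Continuous.mul (continuous_e.comp (by fun_prop))
    exact Continuous.mul (continuous_Dk ℓ) (Complex.continuous_conj.comp (continuous_Dk ℓ)))]
  unfold QW
  rw [Finset.mul_sum]
  apply Finset.sum_congr rfl
  intro m hm
  rw [intervalIntegral.integral_const_mul, spectral ℓ m (Finset.mem_range.1 hm) θ]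
  ring

lemma abs_PW_periodic (W : List Bool) :
    Function.Periodic (fun θ => Complex.abs (PW W θ)) 1 := fun θ => by
  simp only [PW_periodic W θ]
lemma shift_integral (W : List Bool) (t : ℝ) :
    (∫ θ in (0:ℝ)..1, Complex.abs (PW W (θ - t)))
      = ∫ θ in (0:ℝ)..1, Complex.abs (PW W θ) := by
  rw [intervalIntegral.integral_comp_sub_right (fun θ => Complex.abs (PW W θ)) t]
  have h := (abs_PW_periodic W).intervalIntegral_add_eq (0 - t) 0
  simpa [show (0:ℝ) - t = -t by ring, show -t + 1 = 1 - t by ring] using h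
lemma bernstein_L1 (W : List Bool) :
    (∫ θ in (0:ℝ)..1, Complex.abs (QW W θ))
      ≤ 2 * Real.pi * W.length * ∫ θ in (0:ℝ)..1, Complex.abs (PW W θ) := by
  set ℓ := W.length with hℓ
  set N := ∫ θ in (0:ℝ)..1, Complex.abs (PW W θ) with hN
  set G : ℝ → ℝ → ℝ := fun θ t => Complex.abs (PW W (θ - t)) * (Complex.abs (Dk ℓ t))^2 with hG
  have hGc : Continuous (fun p : ℝ × ℝ => G p.1 p.2) := by
    apply Continuous.mul
    · exact Complex.continuous_abs.comp ((continuous_PW W).comp (by fun_prop))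
    · exact (Complex.continuous_abs.comp ((continuous_Dk ℓ).comp continuous_snd)).pow 2
  set μ := volume.restrict (Set.Ioc (0:ℝ) 1) with hμ
  have habs2pi : Complex.abs (2*(Real.pi:ℂ)*Complex.I) = 2*Real.pi := by
    simp [Complex.abs_apply, Complex.normSq_mul]
    rw [Real.sqrt_mul_self Real.pi_pos.le]
  have pointwise : ∀ θ : ℝ, Complex.abs (QW W θ) ≤ 2*Real.pi * ∫ t in (0:ℝ)..1, G θ t := by
    intro θ
    rw [conv_identity W θ, map_mul, habs2pi]
    apply mul_le_mul_of_nonneg_left ?_ (by positivity)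
    refine le_trans ?_ (le_of_eq rfl)
    have h1 := intervalIntegral.norm_integral_le_integral_norm (μ := volume)
      (f := fun t => PW W (θ - t) * (e (ℓ * t) * (Dk ℓ t * (starRingEnd ℂ) (Dk ℓ t))))
      (by norm_num : (0:ℝ) ≤ 1)
    rw [Complex.norm_eq_abs] at h1
    refine h1.trans (le_of_eq ?_)
    apply intervalIntegral.integral_congr
    intro t _
    simp only [Complex.norm_eq_abs, map_mul, abs_e, one_mul, Complex.abs_conj]
    rw [hG]
    ring
  have hInt : Integrable (fun p : ℝ × ℝ => G p.1 p.2) (μ.prod μ) := by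
    rw [hμ, Measure.prod_restrict]
    apply MeasureTheory.IntegrableOn.mono_set
      (t := (Set.Icc (0:ℝ) 1) ×ˢ (Set.Icc (0:ℝ) 1)) ?_
      (Set.prod_mono Set.Ioc_subset_Icc_self Set.Ioc_subset_Icc_self)
    rw [← MeasureTheory.Measure.volume_eq_prod]
    exact (hGc.continuousOn).integrableOn_compact (isCompact_Icc.prod isCompact_Icc)
  have inner : ∀ t : ℝ, (∫ θ, G θ t ∂μ) = (Complex.abs (Dk ℓ t))^2 * N := by
    intro t
    rw [hG]
    simp only
    rw [MeasureTheory.integral_mul_const, mul_comm]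
    congr 1
    rw [hμ, ← intervalIntegral.integral_of_le (by norm_num : (0:ℝ) ≤ 1)]
    exact shift_integral W t
  have hQint : Integrable (fun θ => Complex.abs (QW W θ)) μ :=
    ((Complex.continuous_abs.comp (continuous_QW W)).intervalIntegrable 0 1).1
  have hgint : Integrable (fun θ => ∫ t, G θ t ∂μ) μ := hInt.integral_prod_left
  have pointwise' : ∀ θ, Complex.abs (QW W θ) ≤ 2*Real.pi * ∫ t, G θ t ∂μ := by
    intro θ
    have h := pointwise θ
    rwa [intervalIntegral.integral_of_le (by norm_num : (0:ℝ) ≤ 1)] at h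
  calc ∫ θ in (0:ℝ)..1, Complex.abs (QW W θ)
      = ∫ θ, Complex.abs (QW W θ) ∂μ := by
        rw [intervalIntegral.integral_of_le (by norm_num : (0:ℝ) ≤ 1)]
    _ ≤ ∫ θ, 2*Real.pi * ∫ t, G θ t ∂μ ∂μ :=
        integral_mono hQint (hgint.const_mul _) pointwise'
    _ = 2*Real.pi * ∫ θ, (∫ t, G θ t ∂μ) ∂μ := integral_const_mul _ _
    _ = 2*Real.pi * ∫ t, (∫ θ, G θ t ∂μ) ∂μ := by
        rw [MeasureTheory.integral_integral_swap hInt]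
    _ = 2*Real.pi * ∫ t, ((Complex.abs (Dk ℓ t))^2 * N) ∂μ := by simp_rw [inner]
    _ = 2*Real.pi * ((∫ t, (Complex.abs (Dk ℓ t))^2 ∂μ) * N) := by
        rw [MeasureTheory.integral_mul_const]
    _ = 2*Real.pi*ℓ*N := by
        rw [hμ, ← intervalIntegral.integral_of_le (by norm_num : (0:ℝ) ≤ 1), parseval]
        ring

lemma ftc_bound' (W : List Bool) (a b : ℝ) (hab : a ≤ b) :
    Complex.abs (PW W a) ≤ Complex.abs (PW W b) + ∫ t in a..b, Complex.abs (QW W t) := by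
  have key : PW W b - PW W a = ∫ t in a..b, QW W t := by
    rw [intervalIntegral.integral_eq_sub_of_hasDerivAt (fun t _ => hasDerivAt_PW W t)
      ((continuous_QW W).intervalIntegrable a b)]
  have h1 : Complex.abs (PW W a) ≤ Complex.abs (PW W b) + Complex.abs (PW W b - PW W a) := by
    have h2 := Complex.abs.sub_le (PW W a) (PW W b) (PW W b - PW W a)
    have h3 : PW W a - (PW W b - PW W a) = PW W a - PW W b + PW W a := by ring
    calc Complex.abs (PW W a) = Complex.abs (PW W b + (PW W a - PW W b)) := by ring_nf
      _ ≤ Complex.abs (PW W b) + Complex.abs (PW W a - PW W b) :=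
          Complex.abs.add_le _ _
      _ = Complex.abs (PW W b) + Complex.abs (PW W b - PW W a) := by
          rw [← Complex.abs.map_neg (PW W a - PW W b)]; ring_nf
  refine h1.trans (add_le_add le_rfl ?_)
  rw [key]
  have h4 := intervalIntegral.norm_integral_le_integral_norm (f := QW W) (μ := volume) hab
  simpa [Complex.norm_eq_abs] using h4
lemma abs_Dk_periodic (k : ℕ) : Function.Periodic (fun x => Complex.abs (Dk k x)) 1 := by
  intro x
  have : Dk k (x + 1) = Dk k x := by
    unfold Dk
    apply Finset.sum_congr rfl
    intro j _
    rw [show (j:ℝ) * (x+1) = (j:ℝ)*x + (j:ℕ) by push_cast; ring, e_add, e_nat]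
    ring
  simp [this]
lemma block (W : List Bool) (k : ℕ) (hW : 1 ≤ W.length) (hk : 1 ≤ k) :
    (∫ θ in (0:ℝ)..1, Complex.abs (PW W θ) * Complex.abs (Dk k (W.length * θ)))
      ≤ 22 * Real.log (2+k) * ∫ θ in (0:ℝ)..1, Complex.abs (PW W θ) := by
  set ℓ := W.length with hℓdef
  have hℓ0 : (0:ℝ) < ℓ := by exact_mod_cast hW
  set a : ℕ → ℝ := fun j => j / ℓ with ha
  set f : ℝ → ℝ := fun θ => Complex.abs (PW W θ) with hf
  set g : ℝ → ℝ := fun θ => Complex.abs (Dk k (ℓ * θ)) with hg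
  set q : ℝ → ℝ := fun θ => Complex.abs (QW W θ) with hq
  have hfc : Continuous f := Complex.continuous_abs.comp (continuous_PW W)
  have hgc : Continuous g := Complex.continuous_abs.comp ((continuous_Dk k).comp (by fun_prop))
  have hqc : Continuous q := Complex.continuous_abs.comp (continuous_QW W)
  have hfg_int : ∀ u v : ℝ, IntervalIntegrable (fun θ => f θ * g θ) volume u v :=
    fun u v => (hfc.mul hgc).intervalIntegrable u v
  have haj : ∀ j : ℕ, a j ≤ a (j+1) := by
    intro j
    rw [ha, div_le_div_iff₀ hℓ0 hℓ0]
    push_cast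
    nlinarith [hℓ0]
  have hstep : ∀ j : ℕ, a (j+1) - a j = 1/(ℓ:ℝ) := by
    intro j; rw [ha]; push_cast; field_simp; ring
  have c0 : a 0 = 0 := by simp [ha]
  have c1 : a ℓ = 1 := by rw [ha]; field_simp
  set L := ∫ x in (0:ℝ)..1, Complex.abs (Dk k x) with hL
  have hL0 : 0 ≤ L := by
    rw [hL]
    apply intervalIntegral.integral_nonneg (by norm_num)
    intro x _; exact Complex.abs.nonneg _
  have gint : ∀ j : ℕ, (∫ θ in a j..a (j+1), g θ) = (1/(ℓ:ℝ)) * L := by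
    intro j
    rw [hg]
    have comp := intervalIntegral.mul_integral_comp_mul_left
      (a := a j) (b := a (j+1)) (f := fun x => Complex.abs (Dk k x)) (c := (ℓ:ℝ))
    have e1 : (ℓ:ℝ) * a j = j := by rw [ha]; field_simp
    have e2 : (ℓ:ℝ) * a (j+1) = j + 1 := by rw [ha]; push_cast; field_simp
    rw [e1, e2] at comp
    have per : (∫ x in (j:ℝ)..(j+1:ℝ), Complex.abs (Dk k x)) = L := by
      have h := (abs_Dk_periodic k).intervalIntegral_add_eq (j:ℝ) 0
      rw [hL]
      simpa using h
    rw [← per, ← comp]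
    field_simp
  have key : ∀ j : ℕ, (∫ θ in a j..a (j+1), f θ * g θ)
      ≤ ((ℓ:ℝ) * (∫ θ in a j..a (j+1), f θ) + (∫ θ in a j..a (j+1), q θ)) * ((1/(ℓ:ℝ)) * L) := by
    intro j
    obtain ⟨θ₀, hmem, hmin⟩ := isCompact_Icc.exists_isMinOn
      (Set.nonempty_Icc.mpr (haj j)) (hfc.continuousOn)
    rw [isMinOn_iff] at hmin
    set Qj := ∫ θ in a j..a (j+1), q θ with hQj
    have bound_min : f θ₀ ≤ (ℓ:ℝ) * ∫ θ in a j..a (j+1), f θ := by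
      have h1 : (∫ _ in a j..a (j+1), f θ₀) ≤ ∫ θ in a j..a (j+1), f θ := by
        apply intervalIntegral.integral_mono_on (haj j) intervalIntegrable_const
          (hfc.intervalIntegrable _ _)
        intro x hx; exact hmin x hx
      rw [intervalIntegral.integral_const, hstep j, smul_eq_mul] at h1
      calc f θ₀ = (ℓ:ℝ) * (1/(ℓ:ℝ) * f θ₀) := by field_simp
        _ ≤ (ℓ:ℝ) * ∫ θ in a j..a (j+1), f θ := by
            apply mul_le_mul_of_nonneg_left h1 hℓ0.le
    have bound_sup : ∀ θ ∈ Set.Icc (a j) (a (j+1)), f θ ≤ f θ₀ + Qj := by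
      intro θ hθ
      have hqpos : 0 ≤ᵐ[volume.restrict (Set.Ioc (a j) (a (j+1)))] q :=
        Filter.Eventually.of_forall (fun x => Complex.abs.nonneg _)
      rcases le_total θ₀ θ with hc | hc
      · refine (ftc_bound W θ₀ θ hc).trans (add_le_add le_rfl ?_)
        exact intervalIntegral.integral_mono_interval hmem.1 hc hθ.2 hqpos
          (hqc.intervalIntegrable _ _)
      · refine (ftc_bound' W θ θ₀ hc).trans (add_le_add le_rfl ?_)
        exact intervalIntegral.integral_mono_interval hθ.1 hc hmem.2 hqpos
          (hqc.intervalIntegrable _ _)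
    calc (∫ θ in a j..a (j+1), f θ * g θ)
        ≤ ∫ θ in a j..a (j+1), (f θ₀ + Qj) * g θ := by
          apply intervalIntegral.integral_mono_on (haj j) (hfg_int _ _)
            ((continuous_const.mul hgc).intervalIntegrable _ _)
          intro θ hθ
          exact mul_le_mul_of_nonneg_right (bound_sup θ hθ) (Complex.abs.nonneg _)
      _ = (f θ₀ + Qj) * ((1/(ℓ:ℝ)) * L) := by
          rw [intervalIntegral.integral_const_mul, gint j]
      _ ≤ ((ℓ:ℝ) * (∫ θ in a j..a (j+1), f θ) + Qj) * ((1/(ℓ:ℝ)) * L) := by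
          apply mul_le_mul_of_nonneg_right (add_le_add bound_min le_rfl)
          positivity
  -- assemble
  set F := ∫ θ in (0:ℝ)..1, f θ with hF
  set Q := ∫ θ in (0:ℝ)..1, q θ with hQ
  have hsplit : (∫ θ in (0:ℝ)..1, f θ * g θ) = ∑ j ∈ Finset.range ℓ, ∫ θ in a j..a (j+1), f θ * g θ := by
    rw [intervalIntegral.sum_integral_adjacent_intervals (fun j _ => hfg_int _ _), c0, c1]
  have hsplitF : F = ∑ j ∈ Finset.range ℓ, ∫ θ in a j..a (j+1), f θ := by
    rw [hF, ← c0, ← c1,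
      intervalIntegral.sum_integral_adjacent_intervals (fun j _ => hfc.intervalIntegrable _ _)]
  have hsplitQ : Q = ∑ j ∈ Finset.range ℓ, ∫ θ in a j..a (j+1), q θ := by
    rw [hQ, ← c0, ← c1,
      intervalIntegral.sum_integral_adjacent_intervals (fun j _ => hqc.intervalIntegrable _ _)]
  have main : (∫ θ in (0:ℝ)..1, f θ * g θ) ≤ ((ℓ:ℝ) * F + Q) * ((1/(ℓ:ℝ)) * L) := by
    rw [hsplit]
    calc ∑ j ∈ Finset.range ℓ, ∫ θ in a j..a (j+1), f θ * g θ
        ≤ ∑ j ∈ Finset.range ℓ,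
            ((ℓ:ℝ) * (∫ θ in a j..a (j+1), f θ) + (∫ θ in a j..a (j+1), q θ)) * ((1/(ℓ:ℝ)) * L) :=
          Finset.sum_le_sum (fun j _ => key j)
      _ = ((ℓ:ℝ) * F + Q) * ((1/(ℓ:ℝ)) * L) := by
          rw [← Finset.sum_mul]
          congr 1
          rw [Finset.sum_add_distrib, ← Finset.mul_sum, ← hsplitF, ← hsplitQ]
  have hF0 : 0 ≤ F := by
    rw [hF]
    apply intervalIntegral.integral_nonneg (by norm_num)
    intro x _; exact Complex.abs.nonneg _
  have hbern : Q ≤ 2 * Real.pi * (ℓ:ℝ) * F := bernstein_L1 W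
  have hDkL1 : L ≤ 3 * Real.log (2+k) := Dk_L1 k hk
  have hlog0 : 0 ≤ Real.log (2+k) := Real.log_nonneg (by
    have : (1:ℝ) ≤ (k:ℝ) := by exact_mod_cast hk
    linarith)
  have final : ((ℓ:ℝ) * F + Q) * ((1/(ℓ:ℝ)) * L) ≤ 22 * Real.log (2+k) * F := by
    have h1 : ((ℓ:ℝ) * F + Q) * ((1/(ℓ:ℝ)) * L) ≤ ((ℓ:ℝ) * F + 2*Real.pi*(ℓ:ℝ)*F) * ((1/(ℓ:ℝ)) * L) := by
      apply mul_le_mul_of_nonneg_right (add_le_add le_rfl hbern)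
      positivity
    have h2 : ((ℓ:ℝ) * F + 2*Real.pi*(ℓ:ℝ)*F) * ((1/(ℓ:ℝ)) * L) = (1 + 2*Real.pi) * F * L := by
      field_simp
    have h3 : (1 + 2*Real.pi) * F * L ≤ (1 + 2*Real.pi) * F * (3 * Real.log (2+k)) := by
      apply mul_le_mul_of_nonneg_left hDkL1
      positivity
    have h4 : (1 + 2*Real.pi) * F * (3 * Real.log (2+k)) ≤ 22 * Real.log (2+k) * F := by
      nlinarith [Real.pi_lt_d2, Real.pi_pos, mul_nonneg hF0 hlog0]
    linarith
  exact main.trans final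

/-- Estimate (2.14): if `W = W₁^{k₁} W₂^{k₂} ⋯ W_r^{k_r}`, then
`‖P_W‖₁ ≤ C ∑_{i=1}^r log(2+k_i) ‖P_{W_i}‖₁`. -/
theorem stmt_12 : ∃ C : ℝ, 0 < C ∧
    ∀ (r : ℕ) (W : ℕ → List Bool) (k : ℕ → ℕ),
      1 ≤ r → (∀ i < r, true ∈ W i) → (∀ i < r, 1 ≤ k i) →
      (∫ θ in (0:ℝ)..1,
          ‖PW (((List.range r).map fun i => (List.replicate (k i) (W i)).flatten).flatten) θ‖) ≤
        C * ∑ i ∈ Finset.range r,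
          Real.log (2 + k i) * ∫ θ in (0:ℝ)..1, ‖PW (W i) θ‖ := by
  refine ⟨22, by norm_num, ?_⟩
  intro r W k hr hW hk
  set B : ℕ → List Bool := fun i => (List.replicate (k i) (W i)).flatten with hB
  set L : List (List Bool) := (List.range r).map B with hLdef
  have len : L.length = r := by simp [hLdef]
  have getd : ∀ i, i < r → L.getD i [] = B i := by
    intro i hi
    rw [hLdef]
    rw [List.getD_eq_getElem?_getD]
    simp [hi]
  have step1 : ∀ θ : ℝ, Complex.abs (PW L.flatten θ)
      ≤ ∑ i ∈ Finset.range r, Complex.abs (PW (B i) θ) := by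
    intro θ
    refine (abs_PW_flatten_le L θ).trans (le_of_eq ?_)
    rw [len]
    exact Finset.sum_congr rfl (fun i hi => by rw [getd i (Finset.mem_range.1 hi)])
  have step2 : (∫ θ in (0:ℝ)..1, Complex.abs (PW L.flatten θ))
      ≤ ∑ i ∈ Finset.range r, ∫ θ in (0:ℝ)..1, Complex.abs (PW (B i) θ) := by
    rw [← intervalIntegral.integral_finset_sum (fun i _ => by
      apply Continuous.intervalIntegrable
      exact Complex.continuous_abs.comp (continuous_PW (B i)))]
    apply intervalIntegral.integral_mono_on (by norm_num)
      ((Complex.continuous_abs.comp (continuous_PW L.flatten)).intervalIntegrable 0 1)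
      ((continuous_finset_sum _ (fun i _ =>
        Complex.continuous_abs.comp (continuous_PW (B i)))).intervalIntegrable 0 1)
    intro θ _
    exact step1 θ
  have step3 : ∀ i, i < r → (∫ θ in (0:ℝ)..1, Complex.abs (PW (B i) θ))
      ≤ 22 * Real.log (2 + k i) * ∫ θ in (0:ℝ)..1, Complex.abs (PW (W i) θ) := by
    intro i hi
    have hWi : 1 ≤ (W i).length :=
      List.length_pos_iff.mpr (List.ne_nil_of_mem (hW i hi))
    have congr1 : (∫ θ in (0:ℝ)..1, Complex.abs (PW (B i) θ))
        = ∫ θ in (0:ℝ)..1, Complex.abs (PW (W i) θ) * Complex.abs (Dk (k i) ((W i).length * θ)) := by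
      apply intervalIntegral.integral_congr
      intro θ _
      rw [hB]
      simp only
      rw [PW_replicate, map_mul]
    rw [congr1]
    exact block (W i) (k i) hWi (hk i hi)
  calc (∫ θ in (0:ℝ)..1, Complex.abs (PW L.flatten θ))
      ≤ ∑ i ∈ Finset.range r, ∫ θ in (0:ℝ)..1, Complex.abs (PW (B i) θ) := step2
    _ ≤ ∑ i ∈ Finset.range r,
          22 * Real.log (2 + k i) * ∫ θ in (0:ℝ)..1, Complex.abs (PW (W i) θ) :=
        Finset.sum_le_sum (fun i hi => step3 i (Finset.mem_range.1 hi))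
    _ = 22 * ∑ i ∈ Finset.range r,
          Real.log (2 + k i) * ∫ θ in (0:ℝ)..1, Complex.abs (PW (W i) θ) := by
        rw [Finset.mul_sum]
        exact Finset.sum_congr rfl (fun i _ => by ring)
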